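/- With W(j,α,k) = ∑ over tuples (β_k,...,β_j) of non-negative integers summing to α of ∏_{m=k}^j m^{β_m}, there exist rational numbers A_{m,j} (for k ≤ m ≤ j), independent of α, such that W(j,α,k) = ∑_{m=k}^j (m^{m-k}/(m-k)!)·A_{m,j}·m^α for all non-negative integers α. -/

import Mathlib

/-- `W j α k = ∑_{β_k+⋯+β_j = α, β_i ≥ 0} ∏_{m=k}^j m^{β_m}`, the sum over all
tuples `(β_k, ..., β_j)` of non-negative integers summing to `α` of the product
`∏_{m=k}^j m^{β_m}`. -/
def W (j α k : ℕ) : ℚ :=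
  ∑ β ∈ Finset.Nat.antidiagonalTuple (j - k + 1) α,
    ∏ i : Fin (j - k + 1), ((k + (i : ℕ) : ℕ) : ℚ) ^ (β i)

open Finset

/-- Decompose a sum over `antidiagonalTuple (n+1) α` via `Fin.cons`. -/
lemma sum_antidiagonalTuple_succ (n α : ℕ) (F : (Fin (n + 1) → ℕ) → ℚ) :
    ∑ β ∈ Finset.Nat.antidiagonalTuple (n + 1) α, F β =
      ∑ ab ∈ Finset.HasAntidiagonal.antidiagonal α,
        ∑ γ ∈ Finset.Nat.antidiagonalTuple n ab.2, F (Fin.cons ab.1 γ) := by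
  rw [← Finset.sum_sigma (Finset.HasAntidiagonal.antidiagonal α)
    (fun ab => Finset.Nat.antidiagonalTuple n ab.2)
    (fun p => F (Fin.cons p.1.1 p.2))]
  refine Finset.sum_bij' (fun β _ => (⟨(β 0, ∑ i, β (Fin.succ i)), Fin.tail β⟩ :
      Σ _ : ℕ × ℕ, (Fin n → ℕ))) (fun p _ => Fin.cons p.1.1 p.2) ?_ ?_ ?_ ?_ ?_
  · intro β hβ
    rw [Finset.Nat.mem_antidiagonalTuple] at hβ
    refine Finset.mem_sigma.mpr ⟨?_, ?_⟩
    · simp only [Finset.HasAntidiagonal.mem_antidiagonal]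
      rw [← hβ, Fin.sum_univ_succ]
    · rw [Finset.Nat.mem_antidiagonalTuple]; rfl
  · intro p hp
    rw [Finset.mem_sigma] at hp
    have h1 := Finset.HasAntidiagonal.mem_antidiagonal.mp hp.1
    have h2 := Finset.Nat.mem_antidiagonalTuple.mp hp.2
    rw [Finset.Nat.mem_antidiagonalTuple, Fin.sum_univ_succ]
    simp [h2, h1]
  · intro β _; exact Fin.cons_self_tail β
  · intro p hp
    rw [Finset.mem_sigma] at hp
    have h2 := Finset.Nat.mem_antidiagonalTuple.mp hp.2
    refine Sigma.ext ?_ ?_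
    · simp only [Fin.cons_zero, Fin.cons_succ, h2]
    · simp [Fin.tail]
  · intro β _; rw [Fin.cons_self_tail]

/-- Geometric-type sum over an antidiagonal. -/
lemma geom_antidiagonal (c d : ℚ) (hcd : c ≠ d) (α : ℕ) :
    ∑ ab ∈ Finset.HasAntidiagonal.antidiagonal α, c ^ ab.1 * d ^ ab.2 =
      (c / (c - d)) * c ^ α - (d / (c - d)) * d ^ α := by
  have hsub : c - d ≠ 0 := sub_ne_zero.mpr hcd
  rw [Finset.Nat.sum_antidiagonal_eq_sum_range_succ_mk]
  have h := geom_sum₂_mul c d (α + 1)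
  have h2 : ∑ i ∈ Finset.range (α + 1), c ^ i * d ^ (α - i) =
      (c ^ (α + 1) - d ^ (α + 1)) / (c - d) := by
    rw [eq_div_iff hsub, ← h]
    congr 1
  rw [h2]
  field_simp
  ring

/-- Partial fraction decomposition for the power sums. -/
lemma key_lemma : ∀ n (f : Fin (n + 1) → ℚ), Function.Injective f →
    ∃ lam : Fin (n + 1) → ℚ, ∀ α : ℕ,
      (∑ β ∈ Finset.Nat.antidiagonalTuple (n + 1) α, ∏ i, f i ^ β i) =
        ∑ i, lam i * f i ^ α := by
  intro n
  induction n with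
  | zero =>
    intro f _
    refine ⟨fun _ => 1, fun α => ?_⟩
    rw [Finset.Nat.antidiagonalTuple_one]
    simp [Fin.prod_univ_succ, Fin.sum_univ_succ]
  | succ n ih =>
    intro f hf
    obtain ⟨lam, hlam⟩ := ih (f ∘ Fin.succ) (hf.comp (Fin.succ_injective _))
    simp only [Function.comp_apply] at hlam
    have hne : ∀ i : Fin (n + 1), f 0 ≠ f (Fin.succ i) := by
      intro i h
      exact (Fin.succ_ne_zero i).symm (hf h)
    refine ⟨Fin.cons (∑ i, lam i * (f 0 / (f 0 - f (Fin.succ i))))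
      (fun i => lam i * (-(f (Fin.succ i) / (f 0 - f (Fin.succ i))))), fun α => ?_⟩
    rw [sum_antidiagonalTuple_succ]
    have step1 : ∀ ab : ℕ × ℕ,
        (∑ γ ∈ Finset.Nat.antidiagonalTuple (n + 1) ab.2,
          ∏ i : Fin (n + 2), f i ^ (Fin.cons ab.1 γ i)) =
        f 0 ^ ab.1 * ∑ i : Fin (n + 1), lam i * f (Fin.succ i) ^ ab.2 := by
      intro ab
      rw [← hlam ab.2, Finset.mul_sum]
      apply Finset.sum_congr rfl
      intro γ _
      rw [Fin.prod_univ_succ]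
      simp [Function.comp]
    calc ∑ ab ∈ Finset.HasAntidiagonal.antidiagonal α,
          ∑ γ ∈ Finset.Nat.antidiagonalTuple (n + 1) ab.2,
            ∏ i : Fin (n + 2), f i ^ (Fin.cons ab.1 γ i)
        = ∑ ab ∈ Finset.HasAntidiagonal.antidiagonal α,
            ∑ i : Fin (n + 1), lam i * (f 0 ^ ab.1 * f (Fin.succ i) ^ ab.2) := by
          apply Finset.sum_congr rfl
          intro ab _
          rw [step1 ab, Finset.mul_sum]
          apply Finset.sum_congr rfl
          intro i _; ring
      _ = ∑ i : Fin (n + 1), lam i *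
            ∑ ab ∈ Finset.HasAntidiagonal.antidiagonal α, f 0 ^ ab.1 * f (Fin.succ i) ^ ab.2 := by
          rw [Finset.sum_comm]
          exact Finset.sum_congr rfl fun i _ => (Finset.mul_sum _ _ _).symm
      _ = ∑ i : Fin (n + 1), lam i *
            ((f 0 / (f 0 - f (Fin.succ i))) * f 0 ^ α -
              (f (Fin.succ i) / (f 0 - f (Fin.succ i))) * f (Fin.succ i) ^ α) := by
          exact Finset.sum_congr rfl fun i _ => by
            rw [geom_antidiagonal _ _ (hne i) α]
      _ = _ := by
          conv_rhs => rw [Fin.sum_univ_succ]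
          simp only [Fin.cons_zero, Fin.cons_succ]
          rw [Finset.sum_mul, ← Finset.sum_add_distrib]
          apply Finset.sum_congr rfl
          intro i _
          ring

theorem stmt_10 (j k : ℕ) (hk : 1 ≤ k) (hkj : k ≤ j) :
    ∃ A : ℕ → ℚ, ∀ α : ℕ,
      W j α k = ∑ m ∈ Finset.Icc k j,
        ((m : ℚ) ^ (m - k) / (Nat.factorial (m - k) : ℚ)) * A m * (m : ℚ) ^ α := by
  set n := j - k with hn
  have hfinj : Function.Injective (fun i : Fin (n + 1) => ((k + (i : ℕ) : ℕ) : ℚ)) := by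
    intro a b hab
    simp only [Nat.cast_inj] at hab
    exact Fin.ext (by omega)
  obtain ⟨lam, hlam⟩ := key_lemma n _ hfinj
  refine ⟨fun m => if h : m - k < n + 1 then
      lam ⟨m - k, h⟩ * (Nat.factorial (m - k) : ℚ) / (m : ℚ) ^ (m - k) else 0,
    fun α => ?_⟩
  rw [W, hlam α]
  have hIcc : ∀ F : ℕ → ℚ, ∑ m ∈ Finset.Icc k j, F m =
      ∑ i ∈ Finset.range (n + 1), F (k + i) := by
    intro F
    rw [← Finset.Ico_add_one_right_eq_Icc, Finset.sum_Ico_eq_sum_range]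
    have hjk : j + 1 - k = n + 1 := by omega
    rw [hjk]
  rw [hIcc, ← Fin.sum_univ_eq_sum_range]
  apply Finset.sum_congr rfl
  intro i _
  have h1 : k + (i : ℕ) - k = (i : ℕ) := by omega
  have h2 : (i : ℕ) < n + 1 := i.isLt
  simp only [h1]
  rw [dif_pos h2]
  have hm0 : ((k + (i : ℕ) : ℕ) : ℚ) ≠ 0 := by
    exact_mod_cast (by omega : k + (i : ℕ) ≠ 0)
  have hfac : ((Nat.factorial (i : ℕ) : ℕ) : ℚ) ≠ 0 :=
    Nat.cast_ne_zero.mpr (Nat.factorial_ne_zero _)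
  have hfin : (⟨(i : ℕ), h2⟩ : Fin (n + 1)) = i := Fin.ext rfl
  rw [hfin]
  field_simp
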